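/- Define φ ∈ ℚ(t)(x) by φ(x) = ((t + t² − t³)x − t²)/((t³ − t² − t + 1)x² − (t³ − t² − t)x − t²), and set A = 1/(1−t), B = −t/(t² − t − 1), Q = t/(1−t²) in ℚ(t). Then over ℚ(t): the orbit of 0 under φ is the 4-cycle 0 ↦ 1 ↦ t ↦ B ↦ 0, and moreover φ(∞) = 0, φ(A) = B, and φ(Q) = t, while ∞, A, Q are not in the 4-cycle {0, 1, t, B}. -/

import Mathlib

noncomputable section
open scoped Classical

/-- The quadratic map `φ(x) = ((t + t² − t³)x − t²)/((t³ − t² − t + 1)x² − (t³ − t² − t)x − t²)`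
on `ℙ¹(K) = K ∪ {∞}` over a field `K` containing the parameter `t`; since the denominator
has larger degree, `φ(∞) = 0`. -/
def phiT {K : Type*} [Field K] (t : K) : Option K → Option K
  | none => some 0
  | some x =>
      if (t^3 - t^2 - t + 1)*x^2 - (t^3 - t^2 - t)*x - t^2 = 0 then none
      else some (((t + t^2 - t^3)*x - t^2) /
        ((t^3 - t^2 - t + 1)*x^2 - (t^3 - t^2 - t)*x - t^2))

lemma aeval_ratfunc_ne (p : Polynomial ℚ) (hp : p ≠ 0) :
    (Polynomial.aeval (RatFunc.X : RatFunc ℚ)) p ≠ 0 := by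
  rw [← RatFunc.algebraMap_X (K := ℚ), Polynomial.aeval_algebraMap_apply,
    Polynomial.aeval_X_left_apply]
  exact fun h => hp (RatFunc.algebraMap_injective ℚ (by simpa using h))

set_option maxHeartbeats 1000000 in
/-- Over `ℚ(t)`, with `A = 1/(1−t)`, `B = −t/(t² − t − 1)`, `Q = t/(1−t²)`: the orbit of `0`
under `φ` is the 4-cycle `0 ↦ 1 ↦ t ↦ B ↦ 0`, and `φ(∞) = 0`, `φ(A) = B`, `φ(Q) = t`,
while `∞`, `A`, `Q` are not in the 4-cycle `{0, 1, t, B}`. -/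
theorem stmt_17 :
    ∀ (t A B Q : RatFunc ℚ), t = RatFunc.X →
      A = 1/(1 - t) → B = -t/(t^2 - t - 1) → Q = t/(1 - t^2) →
      phiT t (some 0) = some 1 ∧
      phiT t (some 1) = some t ∧
      phiT t (some t) = some B ∧
      phiT t (some B) = some 0 ∧
      ([some 0, some 1, some t, some B] : List (Option (RatFunc ℚ))).Pairwise (· ≠ ·) ∧
      phiT t none = some 0 ∧
      phiT t (some A) = some B ∧
      phiT t (some Q) = some t ∧
      (none : Option (RatFunc ℚ)) ∉ ({some 0, some 1, some t, some B} : Set (Option (RatFunc ℚ))) ∧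
      some A ∉ ({some 0, some 1, some t, some B} : Set (Option (RatFunc ℚ))) ∧
      some Q ∉ ({some 0, some 1, some t, some B} : Set (Option (RatFunc ℚ))) := by
  intro t A B Q ht hA hB hQ
  -- basic nonvanishing facts
  have h0 : t ≠ 0 := by
    rw [ht]; exact RatFunc.X_ne_zero
  have h1 : t - 1 ≠ 0 := by
    rw [ht]
    have := aeval_ratfunc_ne (Polynomial.X - 1)
      (fun h => by simpa using congrArg (Polynomial.eval 0) h)
    simpa using this
  have h2 : t + 1 ≠ 0 := by
    rw [ht]
    have := aeval_ratfunc_ne (Polynomial.X + 1)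
      (fun h => by simpa using congrArg (Polynomial.eval 0) h)
    simpa using this
  have h3 : t^2 - t - 1 ≠ 0 := by
    rw [ht]
    have := aeval_ratfunc_ne (Polynomial.X^2 - Polynomial.X - 1)
      (fun h => by simpa using congrArg (Polynomial.eval 0) h)
    simpa using this
  have h3' : t * (t - 1) - 1 ≠ 0 := fun h => h3 (by linear_combination h)
  have h4 : t^2 - t + 1 ≠ 0 := by
    rw [ht]
    have := aeval_ratfunc_ne (Polynomial.X^2 - Polynomial.X + 1)
      (fun h => by simpa using congrArg (Polynomial.eval 0) h)
    simpa using this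
  have h5 : t^2 + t - 1 ≠ 0 := by
    rw [ht]
    have := aeval_ratfunc_ne (Polynomial.X^2 + Polynomial.X - 1)
      (fun h => by simpa using congrArg (Polynomial.eval 0) h)
    simpa using this
  have h1' : (1 : RatFunc ℚ) - t ≠ 0 := fun h => h1 (by linear_combination -h)
  have h6 : (1 : RatFunc ℚ) - t^2 ≠ 0 := by
    intro h
    have : -((t - 1) * (t + 1)) = 0 := by linear_combination h
    exact mul_ne_zero h1 h2 (by linear_combination -this)
  -- the denominator of φ at various points
  have den : ∀ x : RatFunc ℚ,
      (t^3 - t^2 - t + 1)*x^2 - (t^3 - t^2 - t)*x - t^2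
        = (t^3 - t^2 - t + 1)*x^2 - (t^3 - t^2 - t)*x - t^2 := fun _ => rfl
  have hd0 : (t^3 - t^2 - t + 1)*(0:RatFunc ℚ)^2 - (t^3 - t^2 - t)*0 - t^2 ≠ 0 := by
    intro h
    exact pow_ne_zero 2 h0 (by linear_combination -h)
  have hd1 : (t^3 - t^2 - t + 1)*(1:RatFunc ℚ)^2 - (t^3 - t^2 - t)*1 - t^2 ≠ 0 := by
    intro h
    exact mul_ne_zero h1 h2 (by linear_combination -h)
  have hdt : (t^3 - t^2 - t + 1)*t^2 - (t^3 - t^2 - t)*t - t^2 ≠ 0 := by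
    intro h
    exact mul_ne_zero (mul_ne_zero (pow_ne_zero 2 h0) h1) h3 (by linear_combination h)
  have hdB : (t^3 - t^2 - t + 1)*B^2 - (t^3 - t^2 - t)*B - t^2 ≠ 0 := by
    rw [hB]
    intro h
    field_simp at h
    exact (mul_ne_zero (mul_ne_zero (pow_ne_zero 2 h0) (pow_ne_zero 2 h1)) h2)
      (by linear_combination h)
  have hdA : (t^3 - t^2 - t + 1)*A^2 - (t^3 - t^2 - t)*A - t^2 ≠ 0 := by
    rw [hA]
    intro h
    field_simp at h
    exact (mul_ne_zero h3 h1) (by linear_combination h)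
  have hdQ : (t^3 - t^2 - t + 1)*Q^2 - (t^3 - t^2 - t)*Q - t^2 ≠ 0 := by
    rw [hQ]
    intro h
    field_simp at h
    exact (mul_ne_zero (pow_ne_zero 2 h0) h6) (by linear_combination h)
  -- distinctness differences
  have dB0 : B ≠ 0 := by
    rw [hB]
    exact div_ne_zero (neg_ne_zero.mpr h0) h3
  have dB1 : B ≠ 1 := by
    rw [hB]
    intro h
    rw [div_eq_iff h3] at h
    exact mul_ne_zero h1 h2 (by linear_combination -h)
  have dBt : B ≠ t := by
    rw [hB]
    intro h
    rw [div_eq_iff h3] at h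
    exact mul_ne_zero (pow_ne_zero 2 h0) h1 (by linear_combination -h)
  have dt0 : t ≠ 0 := h0
  have dt1 : t ≠ 1 := fun h => h1 (by rw [h]; ring)
  have dA0 : A ≠ 0 := by rw [hA]; exact div_ne_zero one_ne_zero h1'
  have dA1 : A ≠ 1 := by
    rw [hA]; intro h
    rw [div_eq_iff h1'] at h
    exact h0 (by linear_combination h)
  have dAt : A ≠ t := by
    rw [hA]; intro h
    rw [div_eq_iff h1'] at h
    exact h4 (by linear_combination h)
  have dAB : A ≠ B := by
    rw [hA, hB]; intro h
    rw [div_eq_div_iff h1' h3] at h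
    exact one_ne_zero (by linear_combination -h)
  have dQ0 : Q ≠ 0 := by rw [hQ]; exact div_ne_zero h0 h6
  have dQ1 : Q ≠ 1 := by
    rw [hQ]; intro h
    rw [div_eq_iff h6] at h
    exact h5 (by linear_combination h)
  have dQt : Q ≠ t := by
    rw [hQ]; intro h
    rw [div_eq_iff h6] at h
    exact pow_ne_zero 3 h0 (by linear_combination h)
  have dQB : Q ≠ B := by
    rw [hQ, hB]; intro h
    rw [div_eq_div_iff h6 h3] at h
    exact pow_ne_zero 2 h0 (by linear_combination -h)
  refine ⟨?_, ?_, ?_, ?_, ?_, ?_, ?_, ?_, ?_, ?_, ?_⟩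
  · simp only [phiT, if_neg hd0]
    congr 1
    rw [div_eq_iff hd0]; ring
  · simp only [phiT, if_neg hd1]
    congr 1
    rw [div_eq_iff hd1]; ring
  · simp only [phiT, if_neg hdt]
    congr 1
    rw [div_eq_iff hdt, hB]
    field_simp
    ring
  · simp only [phiT, if_neg hdB]
    congr 1
    rw [div_eq_iff hdB, hB]
    field_simp
    ring
  · have o0t : (some 0 : Option (RatFunc ℚ)) ≠ some t := by
      simp only [ne_eq, Option.some.injEq]; exact fun hc => h0 hc.symm
    have o0B : (some 0 : Option (RatFunc ℚ)) ≠ some B := by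
      simp only [ne_eq, Option.some.injEq]; exact fun hc => dB0 hc.symm
    have o01 : (some 0 : Option (RatFunc ℚ)) ≠ some 1 := by
      simp only [ne_eq, Option.some.injEq]; exact zero_ne_one
    have o1t : (some 1 : Option (RatFunc ℚ)) ≠ some t := by
      simp only [ne_eq, Option.some.injEq]; exact fun hc => dt1 hc.symm
    have o1B : (some 1 : Option (RatFunc ℚ)) ≠ some B := by
      simp only [ne_eq, Option.some.injEq]; exact fun hc => dB1 hc.symm
    have otB : (some t : Option (RatFunc ℚ)) ≠ some B := by
      simp only [ne_eq, Option.some.injEq]; exact fun hc => dBt hc.symm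
    refine List.Pairwise.cons (fun b hb => ?_)
      (List.Pairwise.cons (fun b hb => ?_)
        (List.Pairwise.cons (fun b hb => ?_) (List.pairwise_singleton _ _)))
    · simp only [List.mem_cons, List.mem_singleton, List.not_mem_nil, or_false] at hb
      rcases hb with rfl | rfl | rfl
      · exact o01
      · exact o0t
      · exact o0B
    · simp only [List.mem_cons, List.mem_singleton, List.not_mem_nil, or_false] at hb
      rcases hb with rfl | rfl
      · exact o1t
      · exact o1B
    · simp only [List.mem_singleton, List.not_mem_nil, or_false] at hb
      subst hb
      exact otB
  · rfl
  · simp only [phiT, if_neg hdA]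
    congr 1
    rw [div_eq_iff hdA, hA, hB]
    field_simp
    ring
  · simp only [phiT, if_neg hdQ]
    congr 1
    rw [div_eq_iff hdQ, hQ]
    field_simp
    ring
  · simp
  · simp only [Set.mem_insert_iff, Set.mem_singleton_iff, Option.some.injEq]
    push_neg
    exact ⟨dA0, dA1, dAt, dAB⟩
  · simp only [Set.mem_insert_iff, Set.mem_singleton_iff, Option.some.injEq]
    push_neg
    exact ⟨dQ0, dQ1, dQt, dQB⟩

end
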